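/- Let G be the semidirect product of the cyclic group ZMod 13 by the cyclic group ZMod 3, where the generator of ZMod 3 acts on ZMod 13 by multiplication by 3 (this group has GAP Id (39, 1)). Let H be the semidirect product of (ZMod 13)² by ZMod 3, where the generator of ZMod 3 acts by the linear automorphism (x, y) ↦ (y, −x − y). Then there exists an injective group homomorphism from G into H. -/

import Mathlib

/-- The homomorphism `AddAut A →* MulAut (Multiplicative A)`. -/
def addAutToMulAut {A : Type} [AddGroup A] : Multiplicative (AddAut A) →* MulAut (Multiplicative A) where
  toFun f := AddEquiv.toMultiplicative f.toAdd
  map_one' := rfl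
  map_mul' _ _ := rfl

/-- The homomorphism `Multiplicative (ZMod n) →* G` sending the generator to an
element `g` with `g ^ n = 1`. -/
def zmodHom {n : ℕ} {G : Type} [Group G] (g : G) (hg : g ^ n = 1) :
    Multiplicative (ZMod n) →* G :=
  AddMonoidHom.toMultiplicativeLeft <|
    ZMod.lift n ⟨zmultiplesHom (Additive G) (Additive.ofMul g), by
      first
        | simpa using congrArg Additive.ofMul hg
        | simp [← ofMul_pow, hg]⟩

/-- Multiplication by `3` as an automorphism of `ZMod 13`. -/
def mulThree : AddAut (ZMod 13) where
  toFun x := 3 * x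
  invFun x := 9 * x
  left_inv := by decide
  right_inv := by decide
  map_add' := by decide

lemma mulThree_pow_three : (addAutToMulAut (Multiplicative.ofAdd mulThree)) ^ 3 = 1 := by
  have h : (Multiplicative.ofAdd mulThree) ^ 3 = 1 :=
    congrArg Multiplicative.ofAdd (AddEquiv.ext (by decide))
  rw [← map_pow, h, map_one]

/-- The action of `ZMod 3` on `ZMod 13` with the generator acting by `x ↦ 3x`. -/
def actG : Multiplicative (ZMod 3) →* MulAut (Multiplicative (ZMod 13)) :=
  zmodHom (addAutToMulAut (Multiplicative.ofAdd mulThree)) mulThree_pow_three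

/-- The automorphism `(x, y) ↦ (y, -x - y)` of `(ZMod 13)²`. -/
def rho : AddAut (ZMod 13 × ZMod 13) where
  toFun p := (p.2, -p.1 - p.2)
  invFun p := (-p.1 - p.2, p.1)
  left_inv := by
    intro p
    simp only [Prod.ext_iff]
    constructor <;> first | trivial | ring_nf
  right_inv := by
    intro p
    simp only [Prod.ext_iff]
    constructor <;> first | trivial | ring_nf
  map_add' := by
    intro p q
    simp only [Prod.ext_iff, Prod.fst_add, Prod.snd_add]
    constructor <;> first | trivial | ring_nf

lemma rho_pow_three : (addAutToMulAut (Multiplicative.ofAdd rho)) ^ 3 = 1 := by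
  have h : (Multiplicative.ofAdd rho) ^ 3 = 1 := by
    apply congrArg Multiplicative.ofAdd
    apply AddEquiv.ext
    intro p
    show rho (rho (rho p)) = p
    simp only [rho, AddEquiv.coe_mk, Equiv.coe_fn_mk, Prod.ext_iff]
    constructor <;> first | trivial | ring_nf
  rw [← map_pow, h, map_one]

/-- The action of `ZMod 3` on `(ZMod 13)²` with the generator acting by
`(x, y) ↦ (y, -x - y)`. -/
def actH : Multiplicative (ZMod 3) →* MulAut (Multiplicative (ZMod 13 × ZMod 13)) :=
  zmodHom (addAutToMulAut (Multiplicative.ofAdd rho)) rho_pow_three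

/-- The group `ZMod 13 ⋊ ZMod 3` with generator acting by multiplication by `3`
(GAP Id `(39, 1)`) embeds into `(ZMod 13)² ⋊ ZMod 3` with generator acting by
`(x, y) ↦ (y, -x - y)`. -/
theorem gapId_39_1_embeds :
    ∃ f : (Multiplicative (ZMod 13) ⋊[actG] Multiplicative (ZMod 3)) →*
      (Multiplicative (ZMod 13 × ZMod 13) ⋊[actH] Multiplicative (ZMod 3)),
      Function.Injective f := by

  let φ : Multiplicative (ZMod 13) →* Multiplicative (ZMod 13 × ZMod 13) :=
    AddMonoidHom.toMultiplicative
      { toFun := fun x => (x, 3 * x)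
        map_zero' := by decide
        map_add' := by decide }
  refine ⟨SemidirectProduct.map φ (MonoidHom.id _) ?_, ?_⟩
  · intro g
    ext n
    revert g n
    decide +kernel
    revert g n
    decide +kernel
  · intro a b hab
    have h1 : φ a.left = φ b.left := congrArg (fun z => z.left) hab
    have h2 : a.right = b.right := congrArg (fun z => z.right) hab
    have hφ : Function.Injective φ := by decide
    exact SemidirectProduct.ext (hφ h1) h2
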